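/- Let τ be a partition of S_n satisfying the pre-convexity axiom (PC): if τ(π) = τ(π') and π'' is a linear extension of the partial order π ∩ π', then τ(π'') = τ(π). Then each class C of τ equals the set of all linear extensions of the poset P = ⋂_{π ∈ C} π. -/

import Mathlib

private lemma swap_adj {n : ℕ} (i j : Fin n) (hij : (i : ℕ) + 1 = (j : ℕ)) {a b : Fin n}
    (h : a ≤ b) (hne : ¬(a = i ∧ b = j)) : Equiv.swap i j a ≤ Equiv.swap i j b := by
  rw [Equiv.swap_apply_def, Equiv.swap_apply_def]
  split_ifs <;>
    (try rfl) <;>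
    (simp only [Fin.ext_iff, Fin.le_def, not_and] at * <;> omega)

private lemma strictMono_fin_id {n : ℕ} (f : Fin n → Fin n) (hf : StrictMono f) : f = id := by
  have hs : Function.Surjective f := Finite.surjective_of_injective hf.injective
  have h := Subsingleton.elim (hf.orderIsoOfSurjective f hs) (OrderIso.refl _)
  funext x
  have := congrArg (fun g => (g : Fin n ≃o Fin n) x) h
  simpa [StrictMono.coe_orderIsoOfSurjective] using this

/-- If `τ` is a partition of `S_n` (given by a statistic map `τ`) satisfying
the pre-convexity axiom (PC), then each class equals the set of all linear extensions of
the intersection of the total orders in that class. Permutations are listings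
`Fin n ≃ Fin n`; `(x,y) ∈ π` means `π.symm x ≤ π.symm y`. -/
theorem stmt2 (n : ℕ) (T : Type*) (τ : Equiv.Perm (Fin n) → T)
    (hPC : ∀ π π' π'' : Equiv.Perm (Fin n), τ π = τ π' →
      (∀ x y : Fin n, π.symm x ≤ π.symm y → π'.symm x ≤ π'.symm y → π''.symm x ≤ π''.symm y) →
      τ π'' = τ π)
    (π : Equiv.Perm (Fin n)) :
    ∀ π'' : Equiv.Perm (Fin n),
      τ π'' = τ π ↔
        (∀ x y : Fin n, (∀ σ : Equiv.Perm (Fin n), τ σ = τ π → σ.symm x ≤ σ.symm y) →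
          π''.symm x ≤ π''.symm y) := by
  intro π''
  constructor
  · intro h x y hall
    exact hall π'' h
  · intro hext
    set F : Equiv.Perm (Fin n) → Finset (Fin n × Fin n) :=
      fun g => Finset.filter
        (fun p => π''.symm p.1 < π''.symm p.2 ∧ g.symm p.2 < g.symm p.1) Finset.univ with hF
    suffices H : ∀ d : ℕ, ∀ π₁ : Equiv.Perm (Fin n), τ π₁ = τ π → (F π₁).card = d →
        τ π'' = τ π by
      exact H (F π).card π rfl rfl
    intro d
    induction d using Nat.strong_induction_on with
    | _ d IH =>
      intro π₁ hπ₁ hcard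
      by_cases hid : π₁ = π''
      · rw [hid] at hπ₁; exact hπ₁
      · -- find an adjacent inversion of f := π''.symm ∘ π₁
        have hexists : ∃ i j : Fin n, (i : ℕ) + 1 = (j : ℕ) ∧
            π''.symm (π₁ j) < π''.symm (π₁ i) := by
          by_contra hcon
          push_neg at hcon
          apply hid
          set f : Fin n → Fin n := fun k => π''.symm (π₁ k) with hf
          have hmono : ∀ k : ℕ, ∀ i j : Fin n, (i : ℕ) + k = (j : ℕ) → f i ≤ f j := by
            intro k
            induction k with
            | zero => intro i j h; have : i = j := Fin.ext (by omega); rw [this]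
            | succ k ih =>
              intro i j h
              have hjk : (i : ℕ) + k < n := by omega
              exact le_trans (ih i ⟨(i : ℕ) + k, hjk⟩ rfl)
                (hcon ⟨(i : ℕ) + k, hjk⟩ j (by simp; omega))
          have hmono' : Monotone f := by
            intro i j hij
            exact hmono ((j : ℕ) - (i : ℕ)) i j (by omega)
          have hinj : Function.Injective f := by
            intro a b hab
            exact π₁.injective (π''.symm.injective hab)
          have hsm : StrictMono f := hmono'.strictMono_of_injective hinj
          have hfid := strictMono_fin_id f hsm
          apply Equiv.ext
          intro k
          have : f k = k := by rw [hfid]; rfl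
          have h2 : π'' (π''.symm (π₁ k)) = π'' k := congrArg π'' this
          simpa using h2
        obtain ⟨i, j, hij, hx⟩ := hexists
        set x := π₁ j with hxdef
        set y := π₁ i with hydef
        have hxy : x ≠ y := by
          intro h
          rw [h] at hx
          exact lt_irrefl _ hx
        -- get σ in the class with x before y
        have hσex : ∃ σ : Equiv.Perm (Fin n), τ σ = τ π ∧ σ.symm x < σ.symm y := by
          by_contra hcon
          push_neg at hcon
          have := hext y x (fun σ hσ => hcon σ hσ)
          exact absurd hx (not_lt.mpr this)
        obtain ⟨σ, hσ, hσxy⟩ := hσex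
        -- the adjacent swap
        set π₂ : Equiv.Perm (Fin n) := (Equiv.swap i j).trans π₁ with hπ₂def
        have hsymm : ∀ a, π₂.symm a = Equiv.swap i j (π₁.symm a) := by
          intro a
          simp [hπ₂def, Equiv.symm_trans_apply]
        have hπ₁x : π₁.symm x = j := π₁.symm_apply_apply j
        have hπ₁y : π₁.symm y = i := π₁.symm_apply_apply i
        have hiltj : i < j := by rw [Fin.lt_def]; omega
        -- key: π₂ is a linear extension of π₁ ∩ σ
        have hkey : ∀ a b : Fin n, π₁.symm a ≤ π₁.symm b → σ.symm a ≤ σ.symm b →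
            π₂.symm a ≤ π₂.symm b := by
          intro a b h1 h2
          rw [hsymm, hsymm]
          apply swap_adj i j hij h1
          rintro ⟨ha, hb⟩
          have ha' : a = y := by
            rw [← hπ₁y] at ha; exact π₁.symm.injective ha
          have hb' : b = x := by
            rw [← hπ₁x] at hb; exact π₁.symm.injective hb
          rw [ha', hb'] at h2
          exact absurd h2 (not_le.mpr hσxy)
        have hτ₂ : τ π₂ = τ π := by
          have := hPC π₁ σ π₂ (hπ₁.trans hσ.symm) hkey
          rw [this, hπ₁]
        -- the measure strictly decreases
        have hsub : F π₂ ⊆ F π₁ := by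
          intro p hp
          rw [hF, Finset.mem_filter] at hp ⊢
          refine ⟨Finset.mem_univ _, hp.2.1, ?_⟩
          by_contra hcon
          push_neg at hcon
          rcases eq_or_ne (π₁.symm p.1) i with h1 | h1
          · rcases eq_or_ne (π₁.symm p.2) j with h2 | h2
            · have hp1 : p.1 = y := by rw [← hπ₁y] at h1; exact π₁.symm.injective h1
              have hp2 : p.2 = x := by rw [← hπ₁x] at h2; exact π₁.symm.injective h2
              have := hp.2.1
              rw [hp1, hp2] at this
              exact absurd hx (not_lt.mpr (le_of_lt this))
            · have := swap_adj i j hij hcon (fun h => h2 h.2)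
              rw [← hsymm, ← hsymm] at this
              exact absurd hp.2.2 (not_lt.mpr this)
          · have := swap_adj i j hij hcon (fun h => h1 h.1)
            rw [← hsymm, ← hsymm] at this
            exact absurd hp.2.2 (not_lt.mpr this)
        have hmem₁ : (x, y) ∈ F π₁ := by
          rw [hF, Finset.mem_filter]
          exact ⟨Finset.mem_univ _, hx, by rw [hπ₁x, hπ₁y]; exact hiltj⟩
        have hmem₂ : (x, y) ∉ F π₂ := by
          rw [hF, Finset.mem_filter]
          rintro ⟨-, -, h⟩
          rw [hsymm, hsymm, hπ₁x, hπ₁y, Equiv.swap_apply_left, Equiv.swap_apply_right] at h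
          exact absurd h (not_lt.mpr (le_of_lt hiltj))
        have hlt : (F π₂).card < d := by
          rw [← hcard]
          exact Finset.card_lt_card ⟨hsub, fun h => hmem₂ (h hmem₁)⟩
        exact IH _ hlt π₂ hτ₂ rfl
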